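/- Let X ⊆ ℝ^n be a nonempty, closed, convex set, let A ∈ ℝ^{m×n}, b ∈ ℝ^m, and let h_j : ℝ^n → ℝ be continuously differentiable convex functions for j = 1,…,J. Suppose the feasible set 𝒳 := {x ∈ X : Ax = b and h_j(x) ≤ 0 for all j = 1,…,J} is nonempty. Define F : ℝ^n → ℝ^n by F(x) := Aᵀ(Ax − b) + Σ_{j=1}^J max{0, h_j(x)} ∇h_j(x). Then SOL(X,F) = 𝒳. -/

import Mathlib

open scoped RealInnerProductSpace

/-- The solution set `SOL(X,F)` of the variational inequality `VI(X,F)`: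
the set of `x ∈ X` such that `⟨F x, y − x⟩ ≥ 0` for all `y ∈ X`. -/
def VISol {n : ℕ} (X : Set (EuclideanSpace ℝ (Fin n)))
    (F : EuclideanSpace ℝ (Fin n) → EuclideanSpace ℝ (Fin n)) : Set (EuclideanSpace ℝ (Fin n)) :=
  {x | x ∈ X ∧ ∀ y ∈ X, 0 ≤ ⟪F x, y - x⟫}

/-- Gradient inequality for differentiable convex functions. -/
lemma grad_ineq {n : ℕ} (h : EuclideanSpace ℝ (Fin n) → ℝ)
    (hs : ContDiff ℝ 1 h) (hc : ConvexOn ℝ Set.univ h)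
    (x y : EuclideanSpace ℝ (Fin n)) :
    ⟪gradient h x, y - x⟫ ≤ h y - h x := by
  set φ : ℝ → ℝ := fun t => h (x + t • (y - x)) with hφ
  have hφc : ConvexOn ℝ Set.univ φ := by
    have := hc.comp_affineMap
      (AffineMap.lineMap x y : ℝ →ᵃ[ℝ] EuclideanSpace ℝ (Fin n))
    have heq : (h ∘ (AffineMap.lineMap x y : ℝ →ᵃ[ℝ] EuclideanSpace ℝ (Fin n))) = φ := by
      funext t
      simp [hφ, AffineMap.lineMap_apply, Function.comp]
      congr 1
      module
    rw [heq] at this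
    simpa using this
  have hdiff : DifferentiableAt ℝ h x := (hs.differentiable one_ne_zero) x
  have hgrad : HasGradientAt h (gradient h x) x := hdiff.hasGradientAt
  have hfd : HasFDerivAt h ((InnerProductSpace.toDual ℝ _) (gradient h x)) x :=
    hasGradientAt_iff_hasFDerivAt.mp hgrad
  have hcurve : HasDerivAt (fun t : ℝ => x + t • (y - x)) (y - x) 0 := by
    have : HasDerivAt (fun t : ℝ => t • (y - x)) (y - x) 0 := by
      simpa using (hasDerivAt_id (0:ℝ)).smul_const (y - x)
    simpa using this.const_add x
  have hder : HasDerivAt φ (⟪gradient h x, y - x⟫) 0 := by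
    have hfd' : HasFDerivAt h ((InnerProductSpace.toDual ℝ _) (gradient h x))
        (x + (0:ℝ) • (y - x)) := by simpa using hfd
    have := hfd'.comp_hasDerivAt 0 hcurve
    simpa [InnerProductSpace.toDual_apply_apply, hφ, Function.comp_def] using this
  have := hφc.le_slope_of_hasDerivAt (Set.mem_univ 0) (Set.mem_univ 1) zero_lt_one hder
  have hslope : slope φ 0 1 = h y - h x := by
    simp [slope_def_field, hφ]
  linarith [this.trans_eq hslope]

/-- For a nonempty closed convex `X ⊆ ℝ^n`, a linear map `A : ℝ^n → ℝ^m`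
(with adjoint `Aᵀ`), `b ∈ ℝ^m`, and continuously differentiable convex `h_j`, if the feasible
set `𝒳 = {x ∈ X : Ax = b, h_j(x) ≤ 0 ∀j}` is nonempty, then for
`F(x) = Aᵀ(Ax − b) + Σⱼ max{0, h_j(x)} ∇h_j(x)` one has `SOL(X,F) = 𝒳`. -/
theorem VISol_eq_feasible_set {n m J : ℕ}
    (X : Set (EuclideanSpace ℝ (Fin n)))
    (hXne : X.Nonempty) (hXcl : IsClosed X) (hXcv : Convex ℝ X)
    (A : EuclideanSpace ℝ (Fin n) →L[ℝ] EuclideanSpace ℝ (Fin m))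
    (b : EuclideanSpace ℝ (Fin m))
    (h : Fin J → EuclideanSpace ℝ (Fin n) → ℝ)
    (hsmooth : ∀ j, ContDiff ℝ 1 (h j))
    (hconv : ∀ j, ConvexOn ℝ Set.univ (h j))
    (hfeas : {x | x ∈ X ∧ A x = b ∧ ∀ j, h j x ≤ 0}.Nonempty)
    (F : EuclideanSpace ℝ (Fin n) → EuclideanSpace ℝ (Fin n))
    (hF : ∀ x, F x = ContinuousLinearMap.adjoint A (A x - b)
      + ∑ j, max 0 (h j x) • gradient (h j) x) :
    VISol X F = {x | x ∈ X ∧ A x = b ∧ ∀ j, h j x ≤ 0} := by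
  ext x
  constructor
  · rintro ⟨hxX, hsol⟩
    obtain ⟨y, hyX, hAy, hhy⟩ := hfeas
    have h0 := hsol y hyX
    rw [hF] at h0
    have hexp : ⟪ContinuousLinearMap.adjoint A (A x - b)
        + ∑ j, max 0 (h j x) • gradient (h j) x, y - x⟫
        = ⟪A x - b, A y - A x⟫ + ∑ j, max 0 (h j x) * ⟪gradient (h j) x, y - x⟫ := by
      rw [inner_add_left, sum_inner, ContinuousLinearMap.adjoint_inner_left, map_sub]
      congr 1
      exact Finset.sum_congr rfl fun j _ => real_inner_smul_left _ _ _
    rw [hexp, hAy] at h0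
    have h1 : ⟪A x - b, b - A x⟫ = -‖A x - b‖ ^ 2 := by
      rw [show b - A x = -(A x - b) by abel, inner_neg_right, real_inner_self_eq_norm_sq]
    have h2 : ∀ j, max 0 (h j x) * ⟪gradient (h j) x, y - x⟫ ≤ -(max 0 (h j x)) ^ 2 := by
      intro j
      have hg := grad_ineq (h j) (hsmooth j) (hconv j) x y
      have hle : max 0 (h j x) * ⟪gradient (h j) x, y - x⟫
          ≤ max 0 (h j x) * (h j y - h j x) :=
        mul_le_mul_of_nonneg_left hg (le_max_left _ _)
      have hsq : max 0 (h j x) * h j x = (max 0 (h j x)) ^ 2 := by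
        rcases le_or_gt (h j x) 0 with hx0 | hx0
        · simp [max_eq_left hx0]
        · rw [max_eq_right hx0.le]; ring
      nlinarith [le_max_left 0 (h j x), hhy j]
    have hsum : ∑ j, max 0 (h j x) * ⟪gradient (h j) x, y - x⟫
        ≤ ∑ j, -(max 0 (h j x)) ^ 2 := Finset.sum_le_sum fun j _ => h2 j
    have hkey : ‖A x - b‖ ^ 2 + ∑ j, (max 0 (h j x)) ^ 2 ≤ 0 := by
      have := h0.trans (by linarith [hsum, h1] :
        ⟪A x - b, b - A x⟫ + ∑ j, max 0 (h j x) * ⟪gradient (h j) x, y - x⟫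
          ≤ -‖A x - b‖ ^ 2 + ∑ j, -(max 0 (h j x)) ^ 2)
      rw [Finset.sum_neg_distrib] at this
      linarith
    have hnn : (0:ℝ) ≤ ∑ j, (max 0 (h j x)) ^ 2 :=
      Finset.sum_nonneg fun j _ => sq_nonneg _
    have hA0 : ‖A x - b‖ ^ 2 ≤ 0 := by linarith
    have hAxb : A x = b := by
      have := sq_nonneg ‖A x - b‖
      have h00 : ‖A x - b‖ ^ 2 = 0 := le_antisymm hA0 this
      have := pow_eq_zero_iff (n := 2) (by norm_num) |>.mp h00
      rwa [norm_eq_zero, sub_eq_zero] at this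
    refine ⟨hxX, hAxb, fun j => ?_⟩
    have hs0 : ∑ j, (max 0 (h j x)) ^ 2 ≤ 0 := by
      have : (0:ℝ) ≤ ‖A x - b‖ ^ 2 := sq_nonneg _
      linarith
    have hj0 : (max 0 (h j x)) ^ 2 = 0 := by
      have := Finset.sum_eq_zero_iff_of_nonneg (fun j _ => sq_nonneg (max 0 (h j x))) |>.mp
        (le_antisymm hs0 hnn) j (Finset.mem_univ j)
      exact this
    have : max 0 (h j x) = 0 := by
      have := pow_eq_zero_iff (n := 2) (by norm_num) |>.mp hj0
      exact this
    by_contra hlt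
    push_neg at hlt
    rw [max_eq_right hlt.le] at this
    exact absurd this (ne_of_gt hlt)
  · rintro ⟨hxX, hAx, hh⟩
    refine ⟨hxX, fun y hy => ?_⟩
    have hF0 : F x = 0 := by
      rw [hF, hAx, sub_self, map_zero]
      have : ∀ j ∈ Finset.univ, max 0 (h j x) • gradient (h j) x = 0 := by
        intro j _
        rw [max_eq_left (hh j), zero_smul]
      rw [Finset.sum_eq_zero this, add_zero]
    rw [hF0, inner_zero_left]
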